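/- If D is Bernoulli randomized, i.e., D_i is independent of D_{-i} and potential outcomes are independent of D, then the population difference in means satisfies τ(1,0) = (1/n) Σ_i E[Y_i(1, D_{-i}) − Y_i(0, D_{-i})], and consequently τ(1,0) satisfies treatment sign preservation: if all unit-level effects Y_i(1,d_{-i}) − Y_i(0,d_{-i}) are nonnegative (almost surely, for all d_{-i}) then τ(1,0) ≥ 0. -/
import Mathlib


open Finset
open scoped Classical

noncomputable section

/-- Probability of event `A` under mass function `p` on a finite space. -/
def prb {Ω : Type*} [Fintype Ω] (p : Ω → ℝ) (A : Ω → Prop) : ℝ :=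
  ∑ ω, if A ω then p ω else 0

/-- Unnormalized expectation of `f` on the event `A`. -/
def eiv {Ω : Type*} [Fintype Ω] (p : Ω → ℝ) (f : Ω → ℝ) (A : Ω → Prop) : ℝ :=
  ∑ ω, if A ω then p ω * f ω else 0

/-- Expectation of `f`. -/
def expv {Ω : Type*} [Fintype Ω] (p : Ω → ℝ) (f : Ω → ℝ) : ℝ := ∑ ω, p ω * f ω

/-- Conditional expectation of `f` given the event `A`. -/
def cexp {Ω : Type*} [Fintype Ω] (p : Ω → ℝ) (f : Ω → ℝ) (A : Ω → Prop) : ℝ :=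
  eiv p f A / prb p A

/-- Conditional probability of `A` given `B`. -/
def cpr {Ω : Type*} [Fintype Ω] (p : Ω → ℝ) (A B : Ω → Prop) : ℝ :=
  prb p (fun ω => A ω ∧ B ω) / prb p B

/-- Real value of a boolean treatment. -/
def bR : Bool → ℝ := fun x => if x then 1 else 0

section Aux

variable {Ω : Type*} [Fintype Ω]

lemma eiv_sub (p : Ω → ℝ) (f g : Ω → ℝ) (A : Ω → Prop) :
    eiv p (fun ω => f ω - g ω) A = eiv p f A - eiv p g A := by
  simp only [eiv, mul_sub, ← Finset.sum_sub_distrib]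
  exact Finset.sum_congr rfl fun ω _ => by split_ifs <;> simp

lemma ite_irrel {c : Prop} (i1 i2 : Decidable c) (x y : ℝ) :
    @ite ℝ c i1 x y = @ite ℝ c i2 x y := by
  cases Subsingleton.elim i1 i2; rfl

lemma decomp {ι : Type*} [Fintype ι] (p : Ω → ℝ) (D : Ω → ι) (F : ι → Ω → ℝ) (A : ι → Prop) [DecidablePred A] :
    (∑ ω, if A (D ω) then p ω * F (D ω) ω else 0)
      = ∑ d, if A d then (∑ ω, if D ω = d then p ω * F d ω else 0) else 0 := by
  have h1 : ∀ d : ι, (if A d then (∑ ω, if D ω = d then p ω * F d ω else 0) else 0)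
      = ∑ ω, if A d then (if D ω = d then p ω * F d ω else 0) else 0 := by
    intro d; split_ifs with h
    · rfl
    · simp
  rw [Finset.sum_congr rfl fun d _ => h1 d, Finset.sum_comm]
  refine Finset.sum_congr rfl fun ω _ => ?_
  rw [Finset.sum_eq_single (D ω)]
  · simp
  · intro d _ hd
    split_ifs with hA hD
    · exact absurd hD.symm hd
    · rfl
    · rfl
  · simp

/-- probability decomposition over values of D -/
lemma decompP {ι : Type*} [Fintype ι] (p : Ω → ℝ) (D : Ω → ι) (A : ι → Prop) [DecidablePred A] :
    prb p (fun ω => A (D ω)) = ∑ d, if A d then prb p (fun ω => D ω = d) else 0 := by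
  have h := decomp p D (fun _ _ => (1 : ℝ)) A
  simp only [mul_one] at h
  simp only [prb]
  exact (Finset.sum_congr rfl fun ω _ => ite_irrel _ _ _ _).trans h

lemma sum_prb_eq_one {ι : Type*} [Fintype ι] (p : Ω → ℝ) (hp1 : ∑ ω, p ω = 1) (D : Ω → ι) :
    ∑ d, prb p (fun ω => D ω = d) = 1 := by
  rw [← hp1]
  simp only [prb]
  rw [Finset.sum_comm]
  refine Finset.sum_congr rfl fun ω _ => ?_
  simp

end Aux

section Master

variable {n : ℕ}

def PP (q : Fin n → ℝ) (d : Fin n → Bool) : ℝ := ∏ j, if d j then q j else 1 - q j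

lemma master (q : Fin n → ℝ) (i : Fin n) (b : Bool) (h : (Fin n → Bool) → ℝ) :
    (∑ d, if d i = b then h d * PP q d else 0)
      = (if b then q i else 1 - q i) * ∑ d, h (Function.update d i b) * PP q d := by
  set w : Bool → ℝ := fun c => if c then q i else 1 - q i with hw
  set Q : (Fin n → Bool) → ℝ := fun d => ∏ j ∈ {i}ᶜ, if d j then q j else 1 - q j with hQdef
  have hP : ∀ d, PP q d = w (d i) * Q d := fun d => Fintype.prod_eq_mul_prod_compl i _
  have hQ : ∀ (d : Fin n → Bool) (c : Bool), Q (Function.update d i c) = Q d := by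
    intro d c
    refine Finset.prod_congr rfl fun j hj => ?_
    rw [Function.update_of_ne (Finset.notMem_singleton.mp (Finset.mem_compl.mp hj))]
  have hinv : Function.Involutive (fun d : Fin n → Bool => Function.update d i (!(d i))) := by
    intro d
    ext j
    by_cases hj : j = i
    · subst hj; simp
    · simp [Function.update_of_ne hj]
  set σ := hinv.toPerm with hσ
  have flipsum : ∀ G : (Fin n → Bool) → ℝ,
      ∑ d, G d = ∑ d, G (Function.update d i (!(d i))) := fun G => (Equiv.sum_comp σ G).symm
  have wsum : ∀ c : Bool, w c + w (!c) = 1 := by intro c; cases c <;> simp [hw] <;> ring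
  -- key: for flip-invariant F
  have key : ∀ F : (Fin n → Bool) → ℝ, (∀ d, F (Function.update d i (!(d i))) = F d) →
      (∑ d, if d i = b then F d else 0) = ∑ d, w (d i) * F d := by
    intro F hF
    have h1 : (2 : ℝ) * (∑ d, if d i = b then F d else 0) = ∑ d, F d := by
      have := flipsum (fun d => if d i = b then F d else 0)
      rw [two_mul]
      nth_rewrite 2 [this]
      rw [← Finset.sum_add_distrib]
      refine Finset.sum_congr rfl fun d _ => ?_
      simp only [Function.update_self, hF]
      cases hb : d i <;> cases b <;> simp
    have h2 : (2 : ℝ) * (∑ d, w (d i) * F d) = ∑ d, F d := by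
      have := flipsum (fun d => w (d i) * F d)
      rw [two_mul]
      nth_rewrite 2 [this]
      rw [← Finset.sum_add_distrib]
      refine Finset.sum_congr rfl fun d _ => ?_
      simp only [Function.update_self, hF]
      rw [← add_mul, wsum, one_mul]
    have := h1.trans h2.symm
    exact mul_left_cancel₀ two_ne_zero this
  set F : (Fin n → Bool) → ℝ := fun d => h (Function.update d i b) * Q d with hFdef
  have hFinv : ∀ d, F (Function.update d i (!(d i))) = F d := by
    intro d
    simp only [hFdef, Function.update_idem, hQ]
  have step1 : (∑ d, if d i = b then h d * PP q d else 0) = w b * ∑ d, if d i = b then F d else 0 := by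
    rw [Finset.mul_sum]
    refine Finset.sum_congr rfl fun d _ => ?_
    split_ifs with hd
    · rw [hP d, hd]
      simp only [hFdef]
      rw [show Function.update d i b = d from by rw [← hd]; exact Function.update_eq_self i d]
      ring
    · ring
  rw [step1, key F hFinv]
  congr 1
  refine Finset.sum_congr rfl fun d _ => ?_
  simp only [hFdef]
  rw [hP d]
  ring

end Master

section Main

variable {Ω : Type*} [Fintype Ω]

lemma decomp_eiv {ι : Type*} [Fintype ι] (p : Ω → ℝ) (D : Ω → ι) (F : ι → Ω → ℝ) (A : ι → Prop) [DecidablePred A] :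
    eiv p (fun ω => F (D ω) ω) (fun ω => A (D ω))
      = ∑ d, if A d then eiv p (F d) (fun ω => D ω = d) else 0 := by
  have h := decomp p D F A
  simp only [eiv]
  exact (Finset.sum_congr rfl fun ω _ => ite_irrel _ _ _ _).trans h

lemma decomp_expv {ι : Type*} [Fintype ι] (p : Ω → ℝ) (D : Ω → ι) (F : ι → Ω → ℝ) :
    expv p (fun ω => F (D ω) ω) = ∑ d, eiv p (F d) (fun ω => D ω = d) := by
  have := decomp p D F (fun _ => True)
  simpa only [expv, eiv, if_true] using this

lemma per_i {n : ℕ} (p : Ω → ℝ) (hp1 : ∑ ω, p ω = 1)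
    (Y : Fin n → (Fin n → Bool) → Ω → ℝ) (D : Ω → Fin n → Bool)
    (q : Fin n → ℝ) (hq0 : ∀ i, 0 < q i) (hq1 : ∀ i, q i < 1)
    (hind : ∀ d : Fin n → Bool,
      prb p (fun ω => D ω = d) = ∏ i, (if d i then q i else 1 - q i))
    (hunc : ∀ (i : Fin n) (d dvec : Fin n → Bool),
      eiv p (Y i d) (fun ω => D ω = dvec) = expv p (Y i d) * prb p (fun ω => D ω = dvec))
    (i : Fin n) :
    cexp p (fun ω => Y i (D ω) ω) (fun ω => D ω i = true) -
      cexp p (fun ω => Y i (D ω) ω) (fun ω => D ω i = false)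
    = expv p (fun ω => Y i (Function.update (D ω) i true) ω -
                       Y i (Function.update (D ω) i false) ω) := by
  set g : (Fin n → Bool) → ℝ := fun d => expv p (Y i d) with hg
  have hPd : ∀ d, prb p (fun ω => D ω = d) = PP q d := hind
  have sumPP : ∑ d, PP q d = 1 := by
    rw [← sum_prb_eq_one p hp1 D]
    exact Finset.sum_congr rfl fun d _ => (hPd d).symm
  have hwne : ∀ b : Bool, (if b then q i else 1 - q i) ≠ 0 := by
    intro b; cases b
    · simpa using sub_ne_zero.mpr (hq1 i).ne'
    · simpa using (hq0 i).ne'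
  have hprb : ∀ b : Bool, prb p (fun ω => D ω i = b) = (if b then q i else 1 - q i) := by
    intro b
    have h1 := decompP p D (fun d => d i = b)
    rw [h1]
    have h2 : (∑ d, if d i = b then prb p (fun ω => D ω = d) else 0)
        = ∑ d, if d i = b then (fun _ : Fin n → Bool => (1:ℝ)) d * PP q d else 0 := by
      refine Finset.sum_congr rfl fun d _ => ?_
      split_ifs
      · rw [hPd d, one_mul]
      · rfl
    rw [h2, master q i b]
    simp only [one_mul, sumPP, mul_one]
  have hcexp : ∀ b : Bool, cexp p (fun ω => Y i (D ω) ω) (fun ω => D ω i = b)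
      = ∑ d, g (Function.update d i b) * PP q d := by
    intro b
    have h1 := decomp_eiv p D (fun d => Y i d) (fun d => d i = b)
    have h2 : eiv p (fun ω => Y i (D ω) ω) (fun ω => D ω i = b)
        = ∑ d, if d i = b then g d * PP q d else 0 := by
      rw [h1]
      refine Finset.sum_congr rfl fun d _ => ?_
      split_ifs
      · rw [hunc i d d, hPd d]
      · rfl
    rw [cexp, h2, master q i b, hprb b, mul_div_cancel_left₀ _ (hwne b)]
  have hexp : expv p (fun ω => Y i (Function.update (D ω) i true) ω -
                       Y i (Function.update (D ω) i false) ω)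
      = ∑ d, (g (Function.update d i true) - g (Function.update d i false)) * PP q d := by
    have h1 := decomp_expv p D
      (fun d ω => Y i (Function.update d i true) ω - Y i (Function.update d i false) ω)
    rw [h1]
    refine Finset.sum_congr rfl fun d _ => ?_
    rw [eiv_sub, hunc i _ d, hunc i _ d, hPd d]
    ring
  rw [hcexp true, hcexp false, hexp, ← Finset.sum_sub_distrib]
  refine Finset.sum_congr rfl fun d _ => ?_
  ring

end Main


/-- under Bernoulli randomization (mutually independent components of `D`,
independent of the potential outcomes), the population difference in means equals
`(1/n) Σᵢ E[Yᵢ(1,D₋ᵢ) − Yᵢ(0,D₋ᵢ)]`; consequently it satisfies treatment sign preservation. -/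
theorem stmt2 {Ω : Type*} [Fintype Ω] (n : ℕ) (hn : 0 < n)
    (p : Ω → ℝ) (hp : ∀ ω, 0 ≤ p ω) (hp1 : ∑ ω, p ω = 1)
    (Y : Fin n → (Fin n → Bool) → Ω → ℝ) (D : Ω → Fin n → Bool)
    (q : Fin n → ℝ) (hq0 : ∀ i, 0 < q i) (hq1 : ∀ i, q i < 1)
    -- mutually independent Bernoulli components
    (hind : ∀ d : Fin n → Bool,
      prb p (fun ω => D ω = d) = ∏ i, (if d i then q i else 1 - q i))
    -- potential outcomes independent of D
    (hunc : ∀ (i : Fin n) (d dvec : Fin n → Bool),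
      eiv p (Y i d) (fun ω => D ω = dvec) = expv p (Y i d) * prb p (fun ω => D ω = dvec)) :
    ((1 : ℝ) / n) * ∑ i,
        (cexp p (fun ω => Y i (D ω) ω) (fun ω => D ω i = true) -
         cexp p (fun ω => Y i (D ω) ω) (fun ω => D ω i = false)) =
      ((1 : ℝ) / n) * ∑ i,
        expv p (fun ω => Y i (Function.update (D ω) i true) ω -
                         Y i (Function.update (D ω) i false) ω) ∧
    ((∀ (i : Fin n) (d : Fin n → Bool) (ω : Ω),
        Y i (Function.update d i false) ω ≤ Y i (Function.update d i true) ω) →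
      0 ≤ ((1 : ℝ) / n) * ∑ i,
        (cexp p (fun ω => Y i (D ω) ω) (fun ω => D ω i = true) -
         cexp p (fun ω => Y i (D ω) ω) (fun ω => D ω i = false))) := by
  have hmain : (∑ i, (cexp p (fun ω => Y i (D ω) ω) (fun ω => D ω i = true) -
         cexp p (fun ω => Y i (D ω) ω) (fun ω => D ω i = false)))
      = ∑ i, expv p (fun ω => Y i (Function.update (D ω) i true) ω -
                         Y i (Function.update (D ω) i false) ω) :=
    Finset.sum_congr rfl fun i _ => per_i p hp1 Y D q hq0 hq1 hind hunc i
  constructor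
  · rw [hmain]
  · intro hmono
    rw [hmain]
    apply mul_nonneg (by positivity)
    apply Finset.sum_nonneg
    intro i _
    apply Finset.sum_nonneg
    intro ω _
    exact mul_nonneg (hp ω) (sub_nonneg.mpr (hmono i (D ω) ω))
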